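/- arXiv:1405.7126 — 13 statements merged into one kernel-verified Lean document; each statement's English description precedes it below -/
import Mathlib

section
/- In the 3-dimensional complex evolution algebra E with natural basis {e1, e2, e3} and multiplication e1·e1 = e1+e2, e2·e2 = -e1-e2, e3·e3 = e2+e3 (and ei·ej = 0 for i≠j), the 2-dimensional subspace E1 spanned by e1+e2 and e2+e3 is closed under multiplication (i.e., is a subalgebra), but E1 admits no natural basis: there do not exist linearly independent f1, f2 ∈ E1 with f1·f2 = 0. -/
open scoped BigOperators

/-- Evolution-algebra multiplication on `Fin n → ℂ` given the matrix `A` of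
structure constants: `(x·y) j = ∑ i, x i * y i * A i j`, so that the standard
basis vectors are pairwise orthogonal and `eᵢ·eᵢ = ∑ j, A i j • e j`. -/
noncomputable def evMul {n : ℕ} (A : Fin n → Fin n → ℂ) (x y : Fin n → ℂ) : Fin n → ℂ :=
  fun j => ∑ i, x i * y i * A i j

/-- Structure constants: e1² = e1+e2, e2² = -e1-e2, e3² = e2+e3. -/
noncomputable def A₀ : Fin 3 → Fin 3 → ℂ := ![![1, 1, 0], ![-1, -1, 0], ![0, 1, 1]]

theorem stmt0 :
    let e : Fin 3 → (Fin 3 → ℂ) := fun i => Pi.single i 1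
    let E₁ : Submodule ℂ (Fin 3 → ℂ) := Submodule.span ℂ {e 0 + e 1, e 1 + e 2}
    (∀ x ∈ E₁, ∀ y ∈ E₁, evMul A₀ x y ∈ E₁) ∧
    ¬ ∃ f₁ f₂ : Fin 3 → ℂ, f₁ ∈ E₁ ∧ f₂ ∈ E₁ ∧
        LinearIndependent ℂ ![f₁, f₂] ∧ evMul A₀ f₁ f₂ = 0 := by
  intro e E₁
  have hmem : ∀ x : Fin 3 → ℂ, x ∈ E₁ ↔ x 1 = x 0 + x 2 := by
    intro x
    rw [show E₁ = Submodule.span ℂ {e 0 + e 1, e 1 + e 2} from rfl,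
      Submodule.mem_span_pair]
    constructor
    · rintro ⟨c, d, rfl⟩
      simp [e, Pi.single_apply]
    · intro h
      refine ⟨x 0, x 2, ?_⟩
      funext j
      fin_cases j <;> simp [e, Pi.single_apply] <;> exact h.symm
  refine ⟨?_, ?_⟩
  · intro x hx y hy
    rw [hmem]
    simp [evMul, A₀, Fin.sum_univ_three]
  · rintro ⟨f₁, f₂, h1, h2, hli, hmul⟩
    rw [hmem] at h1 h2
    have hm0 := congrFun hmul 0
    have hm2 := congrFun hmul 2
    simp [evMul, A₀, Fin.sum_univ_three] at hm0 hm2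
    -- hm0 : f₁ 0 * f₂ 0 - f₁ 1 * f₂ 1 = 0 (or similar), hm2 : f₁ 2 * f₂ 2 = 0
    have hne1 : f₁ ≠ 0 := by
      have := hli.ne_zero 0; simpa using this
    have hne2 : f₂ ≠ 0 := by
      have := hli.ne_zero 1; simpa using this
    rw [LinearIndependent.pair_iff] at hli
    have key : f₁ 0 * f₂ 2 + f₁ 2 * f₂ 0 + f₁ 2 * f₂ 2 = 0 := by
      rw [h1, h2] at hm0; ring_nf at hm0 ⊢; linear_combination -hm0
    -- the case f₁ 2 = 0 and f₂ 2 = 0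
    have case00 : f₁ 2 = 0 → f₂ 2 = 0 → False := by
      intro hb hd
      have := hli (f₂ 0) (-(f₁ 0)) (by
        funext j
        fin_cases j <;> simp [hb, hd, h1, h2] <;> ring)
      apply hne2
      funext j
      fin_cases j <;> simp [h2, hd, this.1]
    rcases hm2 with hb | hd
    · rw [hb] at key
      have : f₁ 0 * f₂ 2 = 0 := by linear_combination key
      rcases mul_eq_zero.mp this with ha | hd
      · apply hne1; funext j; fin_cases j <;> simp [h1, ha, hb]
      · exact case00 hb hd
    · rw [hd] at key
      have : f₁ 2 * f₂ 0 = 0 := by linear_combination key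
      rcases mul_eq_zero.mp this with hb | hc
      · exact case00 hb hd
      · apply hne2; funext j; fin_cases j <;> simp [h2, hc, hd]
end

section
/- In the 3-dimensional complex evolution algebra E with natural basis {e1, e2, e3} and multiplication e1·e1 = e1+e2+e3, e2·e2 = -e1-e2+e3, e3·e3 = 0 (and ei·ej = 0 for i≠j), the subspace E1 spanned by e1+e2 and e3 is a subalgebra with natural basis {e1+e2, e3}, but no natural basis of E1 can be extended to a natural basis of E: there do not exist f1, f2 ∈ E1 and f3 ∈ E such that {f1, f2, f3} is a basis of E with f1·f2 = f1·f3 = f2·f3 = 0. -/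
open scoped BigOperators

/-- Structure constants: e1² = e1+e2+e3, e2² = -e1-e2+e3, e3² = 0. -/
noncomputable def A₁ : Fin 3 → Fin 3 → ℂ := ![![1, 1, 1], ![-1, -1, 1], ![0, 0, 0]]

lemma evMul_eq (x y : Fin 3 → ℂ) :
    evMul A₁ x y = ![x 0 * y 0 - x 1 * y 1, x 0 * y 0 - x 1 * y 1,
      x 0 * y 0 + x 1 * y 1] := by
  funext j
  fin_cases j <;> simp [evMul, A₁, Fin.sum_univ_three] <;> ring

lemma not_indep (u v z : Fin 3 → ℂ) (hu0 : u 0 = 0) (hu1 : u 1 = 0)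
    (hv0 : v 0 = 0) (hv1 : v 1 = 0) : ¬ LinearIndependent ℂ ![u, v, z] := by
  intro h
  have hne : u ≠ 0 := by
    have := h.ne_zero 0
    simpa using this
  rw [Fintype.linearIndependent_iff] at h
  have hsum : ∑ i, (![v 2, -u 2, 0] : Fin 3 → ℂ) i • ![u, v, z] i = 0 := by
    funext j
    simp only [Fin.sum_univ_three, Matrix.cons_val_zero, Matrix.cons_val_one, Matrix.head_cons,
      Matrix.cons_val_two, Matrix.tail_cons, Pi.add_apply, Pi.smul_apply, Pi.zero_apply,
      smul_eq_mul, zero_mul, add_zero, zero_smul]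
    fin_cases j <;> simp [hu0, hu1, hv0, hv1] <;> ring
  have h0 := h _ hsum 0
  have h1 := h _ hsum 1
  simp at h0 h1
  apply hne
  funext j
  fin_cases j <;> simp [hu0, hu1, h1]

theorem stmt1 :
    let e : Fin 3 → (Fin 3 → ℂ) := fun i => Pi.single i 1
    let E₁ : Submodule ℂ (Fin 3 → ℂ) := Submodule.span ℂ {e 0 + e 1, e 2}
    -- E₁ is a subalgebra
    (∀ x ∈ E₁, ∀ y ∈ E₁, evMul A₁ x y ∈ E₁) ∧
    -- {e1+e2, e3} is a natural basis of E₁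
    (LinearIndependent ℂ ![e 0 + e 1, e 2] ∧ evMul A₁ (e 0 + e 1) (e 2) = 0) ∧
    -- but no natural basis of E₁ extends to a natural basis of E
    ¬ ∃ f₁ f₂ f₃ : Fin 3 → ℂ, f₁ ∈ E₁ ∧ f₂ ∈ E₁ ∧
        LinearIndependent ℂ ![f₁, f₂, f₃] ∧
        evMul A₁ f₁ f₂ = 0 ∧ evMul A₁ f₁ f₃ = 0 ∧ evMul A₁ f₂ f₃ = 0 := by
  intro e E₁
  have he : ∀ i j : Fin 3, e i j = if i = j then 1 else 0 := by
    intro i j; simp [e, Pi.single_apply, eq_comm]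
  have hmem : ∀ x : Fin 3 → ℂ, x ∈ E₁ ↔ x 0 = x 1 := by
    intro x
    rw [show E₁ = Submodule.span ℂ {e 0 + e 1, e 2} from rfl, Submodule.mem_span_pair]
    constructor
    · rintro ⟨m, n, h⟩
      have h0 := congrFun h 0
      have h1 := congrFun h 1
      simp [he] at h0 h1
      rw [← h0, ← h1]
    · intro hx
      refine ⟨x 0, x 2, ?_⟩
      funext j
      fin_cases j <;> simp [he, hx]
  refine ⟨?_, ⟨?_, ?_⟩, ?_⟩
  · intro x hx y hy
    rw [hmem] at hx hy ⊢
    rw [evMul_eq]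
    simp
  · rw [Fintype.linearIndependent_iff]
    intro g hg
    have h0 := congrFun hg 0
    have h2 := congrFun hg 2
    simp [Fin.sum_univ_two, he] at h0 h2
    intro i
    fin_cases i <;> simp [h0, h2]
  · rw [evMul_eq]
    funext j
    fin_cases j <;> simp [he]
  · rintro ⟨f₁, f₂, f₃, h₁, h₂, hind, h12, h13, h23⟩
    rw [hmem] at h₁ h₂
    -- products
    have e12 := congrFun h12 2
    have e13a := congrFun h13 0
    have e13b := congrFun h13 2
    have e23a := congrFun h23 0
    have e23b := congrFun h23 2
    rw [evMul_eq] at e12 e13a e13b e23a e23b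
    simp at e12 e13a e13b e23a e23b
    rw [← h₁] at e12 e13a e13b
    rw [← h₂] at e12 e23a e23b
    have hac : f₁ 0 * f₂ 0 = 0 := by
      have : f₁ 0 * f₂ 0 + f₁ 0 * f₂ 0 = 0 := e12
      linear_combination this / 2
    have h13p : f₁ 0 * f₃ 0 = 0 := by linear_combination (e13a + e13b) / 2
    have h13q : f₁ 0 * f₃ 1 = 0 := by linear_combination (e13b - e13a) / 2
    have h23p : f₂ 0 * f₃ 0 = 0 := by linear_combination (e23a + e23b) / 2
    have h23q : f₂ 0 * f₃ 1 = 0 := by linear_combination (e23b - e23a) / 2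
    rcases mul_eq_zero.mp hac with ha | hc
    · rcases eq_or_ne (f₂ 0) 0 with hc | hc
      · exact not_indep f₁ f₂ f₃ ha (h₁ ▸ ha) hc (h₂ ▸ hc) hind
      · have hp : f₃ 0 = 0 := (mul_eq_zero.mp h23p).resolve_left hc
        have hq : f₃ 1 = 0 := (mul_eq_zero.mp h23q).resolve_left hc
        apply not_indep f₁ f₃ f₂ ha (h₁ ▸ ha) hp hq
        have := hind.comp ![0, 2, 1] (by decide)
        convert this using 1
        funext j
        fin_cases j <;> rfl
    · rcases eq_or_ne (f₁ 0) 0 with ha | ha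
      · exact not_indep f₁ f₂ f₃ ha (h₁ ▸ ha) hc (h₂ ▸ hc) hind
      · have hp : f₃ 0 = 0 := (mul_eq_zero.mp h13p).resolve_left ha
        have hq : f₃ 1 = 0 := (mul_eq_zero.mp h13q).resolve_left ha
        apply not_indep f₂ f₃ f₁ hc (h₂ ▸ hc) hp hq
        have := hind.comp ![1, 2, 0] (by decide)
        convert this using 1
        funext j
        fin_cases j <;> rfl
end

section
/- The 2-dimensional complex evolution algebra E1 with natural basis {e1, e2} and multiplication e1·e1 = e1, e2·e2 = 0, e1·e2 = 0 satisfies the condition P: every subalgebra of E1 is an evolution subalgebra with a natural basis extendable to a natural basis of E1. Concretely, every 1-dimensional subalgebra of E1 is spanned by a scalar multiple of e1 or of e2. -/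
open scoped BigOperators

/-- Structure constants of E₁ : e1² = e1, e2² = 0. -/
noncomputable def AE1 : Fin 2 → Fin 2 → ℂ := ![![1, 0], ![0, 0]]

lemma evMul_AE1 (x y : Fin 2 → ℂ) :
    evMul AE1 x y = fun j => if j = 0 then x 0 * y 0 else 0 := by
  funext j
  fin_cases j <;> simp [evMul, AE1, Fin.sum_univ_two]

lemma nat_basis_li :
    LinearIndependent ℂ ((↑) : ({Pi.single 0 1, Pi.single 1 1} : Set (Fin 2 → ℂ)) → (Fin 2 → ℂ)) := by
  have h := (Pi.basisFun ℂ (Fin 2)).linearIndependent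
  have hr : Set.range (Pi.basisFun ℂ (Fin 2)) =
      ({Pi.single 0 1, Pi.single 1 1} : Set (Fin 2 → ℂ)) := by
    ext v
    simp only [Set.mem_range, Set.mem_insert_iff, Set.mem_singleton_iff]
    constructor
    · rintro ⟨i, rfl⟩
      fin_cases i <;> simp [Pi.basisFun_apply]
    · rintro (rfl | rfl)
      exacts [⟨0, by simp [Pi.basisFun_apply]⟩, ⟨1, by simp [Pi.basisFun_apply]⟩]
  have := (linearIndepOn_id_range_iff h.injective).mpr h
  rw [hr] at this
  exact this

lemma nat_basis_span :
    Submodule.span ℂ ({Pi.single 0 1, Pi.single 1 1} : Set (Fin 2 → ℂ)) = ⊤ := by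
  have hr : Set.range (Pi.basisFun ℂ (Fin 2)) =
      ({Pi.single 0 1, Pi.single 1 1} : Set (Fin 2 → ℂ)) := by
    ext v
    simp only [Set.mem_range, Set.mem_insert_iff, Set.mem_singleton_iff]
    constructor
    · rintro ⟨i, rfl⟩
      fin_cases i <;> simp [Pi.basisFun_apply]
    · rintro (rfl | rfl)
      exacts [⟨0, by simp [Pi.basisFun_apply]⟩, ⟨1, by simp [Pi.basisFun_apply]⟩]
  rw [← hr]
  exact (Pi.basisFun ℂ (Fin 2)).span_eq

lemma orth_prop : ∀ x ∈ ({Pi.single 0 1, Pi.single 1 1} : Set (Fin 2 → ℂ)),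
    ∀ y ∈ ({Pi.single 0 1, Pi.single 1 1} : Set (Fin 2 → ℂ)), x ≠ y → evMul AE1 x y = 0 := by
  rintro x (rfl | rfl) y (rfl | rfl) hxy
  · exact absurd rfl hxy
  · funext j; rw [evMul_AE1]; simp
  · funext j; rw [evMul_AE1]; simp
  · exact absurd rfl hxy

lemma part1 : ∀ x : Fin 2 → ℂ, x ≠ 0 → evMul AE1 x x ∈ Submodule.span ℂ {x} →
    (∃ c : ℂ, x = c • (Pi.single 0 1 : Fin 2 → ℂ)) ∨ (∃ c : ℂ, x = c • (Pi.single 1 1 : Fin 2 → ℂ)) := by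
  intro x hx hmem
  obtain ⟨c, hc⟩ := Submodule.mem_span_singleton.mp hmem
  have h1 : c * x 1 = 0 := by
    have := congrFun hc 1
    rw [evMul_AE1] at this
    simpa using this.symm
  by_cases hx1 : x 1 = 0
  · left
    refine ⟨x 0, funext fun j => ?_⟩
    fin_cases j <;> simp [hx1]
  · right
    have hc0 : c = 0 := by
      rcases mul_eq_zero.mp h1 with h | h
      · exact h
      · exact absurd h hx1
    have h0 : x 0 * x 0 = 0 := by
      have := congrFun hc 0
      rw [evMul_AE1] at this
      simpa [hc0] using this.symm
    have hx0 : x 0 = 0 := by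
      rcases mul_eq_zero.mp h0 with h | h <;> exact h
    refine ⟨x 1, funext fun j => ?_⟩
    fin_cases j <;> simp [hx0]

theorem stmt2 :
    let e : Fin 2 → (Fin 2 → ℂ) := fun i => Pi.single i 1
    -- every 1-dimensional subalgebra is spanned by a scalar multiple of e1 or of e2,
    (∀ x : Fin 2 → ℂ, x ≠ 0 → evMul AE1 x x ∈ Submodule.span ℂ {x} →
      (∃ c : ℂ, x = c • e 0) ∨ (∃ c : ℂ, x = c • e 1)) ∧
    -- hence every subalgebra admits a natural basis extendable to a natural basis of E₁:
    (∀ S : Submodule ℂ (Fin 2 → ℂ), (∀ x ∈ S, ∀ y ∈ S, evMul AE1 x y ∈ S) →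
      ∃ s t : Set (Fin 2 → ℂ), s ⊆ t ∧
        LinearIndependent ℂ ((↑) : s → (Fin 2 → ℂ)) ∧ Submodule.span ℂ s = S ∧
        LinearIndependent ℂ ((↑) : t → (Fin 2 → ℂ)) ∧ Submodule.span ℂ t = ⊤ ∧
        (∀ x ∈ t, ∀ y ∈ t, x ≠ y → evMul AE1 x y = 0)) := by
  intro e
  constructor
  · exact part1
  · intro S hS
    set t : Set (Fin 2 → ℂ) := {Pi.single 0 1, Pi.single 1 1} with ht
    have hd : Module.finrank ℂ S ≤ 2 := by
      have := Submodule.finrank_le S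
      simpa using this
    interval_cases h : Module.finrank ℂ S
    · -- S = ⊥
      refine ⟨∅, t, Set.empty_subset _, linearIndependent_empty_type, ?_,
        nat_basis_li, nat_basis_span, orth_prop⟩
      rw [Submodule.span_empty]
      exact (Submodule.finrank_eq_zero.mp h).symm
    · -- dim 1
      obtain ⟨⟨v, hvS⟩, hv0, hvspan⟩ := finrank_eq_one_iff'.mp h
      have hv : v ≠ 0 := by
        intro hv
        apply hv0
        exact Subtype.ext hv
      have hSspan : S = Submodule.span ℂ {v} := by
        apply le_antisymm
        · intro w hw
          obtain ⟨c, hc⟩ := hvspan ⟨w, hw⟩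
          have : c • v = w := congrArg Subtype.val hc
          rw [← this]
          exact Submodule.smul_mem _ _ (Submodule.mem_span_singleton_self v)
        · rw [Submodule.span_le, Set.singleton_subset_iff]
          exact hvS
      have hmul : evMul AE1 v v ∈ Submodule.span ℂ {v} := by
        rw [← hSspan]; exact hS v hvS v hvS
      rcases part1 v hv hmul with ⟨c, hc⟩ | ⟨c, hc⟩
      · have hc0 : c ≠ 0 := by rintro rfl; simp at hc; exact hv hc
        refine ⟨{Pi.single 0 1}, t, by simp [ht],
          LinearIndepOn.singleton (v := id) (fun h => by simpa using congrFun h 0), ?_,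
          nat_basis_li, nat_basis_span, orth_prop⟩
        rw [hSspan, hc]
        exact (Submodule.span_singleton_smul_eq (IsUnit.mk0 c hc0) _).symm
      · have hc0 : c ≠ 0 := by rintro rfl; simp at hc; exact hv hc
        refine ⟨{Pi.single 1 1}, t, by simp [ht],
          LinearIndepOn.singleton (v := id) (fun h => by simpa using congrFun h 1), ?_,
          nat_basis_li, nat_basis_span, orth_prop⟩
        rw [hSspan, hc]
        exact (Submodule.span_singleton_smul_eq (IsUnit.mk0 c hc0) _).symm
    · -- S = ⊤
      have hStop : S = ⊤ := by
        apply Submodule.eq_top_of_finrank_eq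
        rw [h]
        simp
      refine ⟨t, t, le_refl _, nat_basis_li, by rw [nat_basis_span, hStop],
        nat_basis_li, nat_basis_span, orth_prop⟩
end

section
/- The 2-dimensional complex evolution algebra E4 with natural basis {e1, e2} and multiplication e1·e1 = e2, e2·e2 = 0, e1·e2 = 0 satisfies: every 1-dimensional subalgebra is spanned by a scalar multiple of e2, and hence every subalgebra admits a natural basis extendable to a natural basis of E4. -/
open scoped BigOperators

/-- Structure constants of E₄ : e1² = e2, e2² = 0. -/
noncomputable def AE4 : Fin 2 → Fin 2 → ℂ := ![![0, 1], ![0, 0]]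

lemma evMul_zero0 (x y : Fin 2 → ℂ) : evMul AE4 x y 0 = 0 := by
  simp [evMul, AE4, Fin.sum_univ_two]

lemma evMul_one (x y : Fin 2 → ℂ) : evMul AE4 x y 1 = x 0 * y 0 := by
  simp [evMul, AE4, Fin.sum_univ_two]

lemma key (x : Fin 2 → ℂ) (_hx : x ≠ 0) (h : evMul AE4 x x ∈ Submodule.span ℂ {x}) :
    ∃ c : ℂ, x = c • (Pi.single 1 1 : Fin 2 → ℂ) := by
  rw [Submodule.mem_span_singleton] at h
  obtain ⟨c, hc⟩ := h
  have h0 : c * x 0 = 0 := by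
    have := congrFun hc 0
    simpa [evMul_zero0] using this
  have h1 : c * x 1 = x 0 * x 0 := by
    have := congrFun hc 1
    simpa [evMul_one] using this
  have hx0 : x 0 = 0 := by
    rcases mul_eq_zero.1 h0 with hc0 | hx0
    · subst hc0
      simpa using (mul_self_eq_zero.1 (by linear_combination -h1))
    · exact hx0
  refine ⟨x 1, funext fun j => ?_⟩
  fin_cases j <;> simp [hx0]

theorem stmt3 :
    let e : Fin 2 → (Fin 2 → ℂ) := fun i => Pi.single i 1
    -- every 1-dimensional subalgebra is spanned by a scalar multiple of e2,
    (∀ x : Fin 2 → ℂ, x ≠ 0 → evMul AE4 x x ∈ Submodule.span ℂ {x} →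
      ∃ c : ℂ, x = c • e 1) ∧
    -- hence every subalgebra admits a natural basis extendable to a natural basis of E₄:
    (∀ S : Submodule ℂ (Fin 2 → ℂ), (∀ x ∈ S, ∀ y ∈ S, evMul AE4 x y ∈ S) →
      ∃ s t : Set (Fin 2 → ℂ), s ⊆ t ∧
        LinearIndependent ℂ ((↑) : s → (Fin 2 → ℂ)) ∧ Submodule.span ℂ s = S ∧
        LinearIndependent ℂ ((↑) : t → (Fin 2 → ℂ)) ∧ Submodule.span ℂ t = ⊤ ∧
        (∀ x ∈ t, ∀ y ∈ t, x ≠ y → evMul AE4 x y = 0)) := by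
  intro e
  have he : e = fun i => Pi.single i (1:ℂ) := rfl
  -- facts about the standard basis set
  have hrange : Set.range e = {e 0, e 1} := by
    ext v
    constructor
    · rintro ⟨i, rfl⟩; fin_cases i <;> simp
    · rintro (rfl | rfl) <;> exact ⟨_, rfl⟩
  have hbasis : ⇑(Pi.basisFun ℂ (Fin 2)) = e := by
    funext i; simp [he]
  have hli : LinearIndependent ℂ ((↑) : ({e 0, e 1} : Set (Fin 2 → ℂ)) → (Fin 2 → ℂ)) := by
    rw [← hrange]
    exact (Pi.basisFun ℂ (Fin 2)).linearIndependent.linearIndepOn_id.mono (by rw [hbasis])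
  have hspan : Submodule.span ℂ ({e 0, e 1} : Set (Fin 2 → ℂ)) = ⊤ := by
    rw [← hrange, ← hbasis]
    exact (Pi.basisFun ℂ (Fin 2)).span_eq
  have hne : e 0 ≠ e 1 := by
    intro h
    have := congrFun h 0
    simp [he] at this
  have hmulzero : ∀ x ∈ ({e 0, e 1} : Set (Fin 2 → ℂ)), ∀ y ∈ ({e 0, e 1} : Set (Fin 2 → ℂ)),
      x ≠ y → evMul AE4 x y = 0 := by
    rintro x (rfl | rfl) y (rfl | rfl) hxy <;> try (exact absurd rfl hxy)
    all_goals
      funext j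
      fin_cases j <;> simp [evMul_zero0, evMul_one, he]
  constructor
  · intro x hx h
    exact key x hx h
  · intro S hS
    by_cases htop : S = ⊤
    · exact ⟨{e 0, e 1}, {e 0, e 1}, subset_rfl, hli, by rw [hspan, htop], hli, hspan, hmulzero⟩
    -- S ≠ ⊤ : every element of S has first coordinate 0
    have hfirst : ∀ x ∈ S, x 0 = 0 := by
      intro x hxS
      by_contra hx0
      apply htop
      -- e 1 ∈ S
      have hxx : evMul AE4 x x ∈ S := hS x hxS x hxS
      have he1 : e 1 ∈ S := by
        have : (x 0 * x 0)⁻¹ • evMul AE4 x x = e 1 := by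
          funext j
          fin_cases j <;>
            simp [evMul_zero0, evMul_one, he, Pi.smul_apply, smul_eq_mul]
          field_simp
        rw [← this]
        exact S.smul_mem _ hxx
      have he0 : e 0 ∈ S := by
        have : (x 0)⁻¹ • (x - x 1 • e 1) = e 0 := by
          funext j
          fin_cases j <;> simp [he, smul_eq_mul]
          · field_simp
        rw [← this]
        exact S.smul_mem _ (S.sub_mem hxS (S.smul_mem _ he1))
      rw [eq_top_iff, ← hspan, Submodule.span_le]
      rintro v (rfl | rfl)
      exacts [he0, he1]
    by_cases hbot : S = ⊥
    · refine ⟨∅, {e 0, e 1}, Set.empty_subset _, linearIndependent_empty_type.comp _ (fun a => a.2.elim), by simp [hbot], hli, hspan, hmulzero⟩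
    -- S = span {e 1}
    obtain ⟨x, hxS, hx0⟩ := Submodule.exists_mem_ne_zero_of_ne_bot hbot
    have hx0' := hfirst x hxS
    have hx1 : x 1 ≠ 0 := by
      intro h1
      apply hx0
      funext j; fin_cases j <;> simp [hx0', h1]
    have he1S : e 1 ∈ S := by
      have : (x 1)⁻¹ • x = e 1 := by
        funext j
        fin_cases j <;> simp [he, hx0', smul_eq_mul]
        field_simp
      rw [← this]; exact S.smul_mem _ hxS
    have hSeq : Submodule.span ℂ ({e 1} : Set (Fin 2 → ℂ)) = S := by
      apply le_antisymm
      · rw [Submodule.span_le, Set.singleton_subset_iff]; exact he1S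
      · intro y hyS
        rw [Submodule.mem_span_singleton]
        refine ⟨y 1, funext fun j => ?_⟩
        fin_cases j <;> simp [he, hfirst y hyS, smul_eq_mul]
    refine ⟨{e 1}, {e 0, e 1}, by simp, ?_, hSeq, hli, hspan, hmulzero⟩
    apply linearIndependent_unique_iff.mpr
    simp [he]
end

section
/- In the 2-dimensional complex evolution algebra E2 with natural basis {e1, e2} and multiplication e1·e1 = e1, e2·e2 = e1, e1·e2 = 0, the element x = e1 + i·e2 satisfies x·x = 0, so ⟨x⟩ is a 1-dimensional subalgebra; moreover there is no y ∈ E2 with {x, y} linearly independent and x·y = 0. Hence E2 does not satisfy condition P. -/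
open scoped BigOperators

/-- Structure constants of E₂ : e1² = e1, e2² = e1. -/
noncomputable def AE2 : Fin 2 → Fin 2 → ℂ := ![![1, 0], ![1, 0]]

theorem stmt4 :
    let e : Fin 2 → (Fin 2 → ℂ) := fun i => Pi.single i 1
    let x : Fin 2 → ℂ := e 0 + Complex.I • e 1
    -- x·x = 0, so ⟨x⟩ is a 1-dimensional subalgebra,
    evMul AE2 x x = 0 ∧
    -- but there is no y with {x, y} linearly independent and x·y = 0
    ¬ ∃ y : Fin 2 → ℂ, LinearIndependent ℂ ![x, y] ∧ evMul AE2 x y = 0 := by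
  intro e x
  have hx0 : x 0 = 1 := by simp [x, e]
  have hx1 : x 1 = Complex.I := by simp [x, e]
  constructor
  · funext j
    simp [evMul, AE2, Fin.sum_univ_two, hx0, hx1]
  · rintro ⟨y, hli, hmul⟩
    have h0 := congrFun hmul 0
    have hy : y 0 + Complex.I * y 1 = 0 := by
      simpa [evMul, AE2, Fin.sum_univ_two, hx0, hx1, Pi.zero_apply] using h0
    have := Fintype.linearIndependent_iff.mp hli ![-Complex.I * y 1, -1] ?_ 1
    · simp at this
    · funext j
      simp [Fin.sum_univ_two]
      fin_cases j
      · simp [hx0]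
        linear_combination -hy
      · simp [hx1]
        linear_combination (-y 1) * Complex.I_mul_I
end

section
/- In the 2-dimensional complex evolution algebra E3 with natural basis {e1, e2} and multiplication e1·e1 = e1+e2, e2·e2 = -e1-e2, e1·e2 = 0, the element x = e1+e2 satisfies x·x = 0, so ⟨x⟩ is a subalgebra; and for every y ∈ E3 with x·y = 0, the pair {x, y} is linearly dependent. Hence E3 does not satisfy condition P. -/
open scoped BigOperators

/-- Structure constants of E₃ : e1² = e1+e2, e2² = -e1-e2. -/
noncomputable def AE3 : Fin 2 → Fin 2 → ℂ := ![![1, 1], ![-1, -1]]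

theorem stmt5 :
    let e : Fin 2 → (Fin 2 → ℂ) := fun i => Pi.single i 1
    let x : Fin 2 → ℂ := e 0 + e 1
    -- x·x = 0, so ⟨x⟩ is a subalgebra,
    evMul AE3 x x = 0 ∧
    -- and every y with x·y = 0 makes {x, y} linearly dependent
    (∀ y : Fin 2 → ℂ, evMul AE3 x y = 0 → ¬ LinearIndependent ℂ ![x, y]) := by
  intro e x
  have hx0 : x 0 = 1 := by simp [x, e]
  have hx1 : x 1 = 1 := by simp [x, e]
  constructor
  · funext j
    simp [evMul, Fin.sum_univ_two, hx0, hx1, AE3]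
    fin_cases j <;> norm_num
  · intro y hy hli
    have h0 : evMul AE3 x y 0 = 0 := by rw [hy]; rfl
    have heq : y 1 = y 0 := by
      simp [evMul, Fin.sum_univ_two, hx0, hx1, AE3] at h0
      linear_combination -h0
    have hyx : y = y 0 • x := by
      funext j
      fin_cases j <;> simp [hx0, hx1, heq]
    rw [Fintype.linearIndependent_iff] at hli
    have := hli ![y 0, -1] ?_ 1
    · norm_num at this
    · have h : (y 0) • x + (-1 : ℂ) • y = 0 := by
        funext j; rw [hyx]; fin_cases j <;> simp [hx0, hx1]
      simpa [Fin.sum_univ_two] using h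
end

section
/- Let a2, a3 ∈ ℂ with 1 - a2·a3 ≠ 0, and let E5 be the 2-dimensional complex evolution algebra with e1·e1 = e1 + a2·e2, e2·e2 = a3·e1 + e2, e1·e2 = 0. Then there exist A1, A2 ∈ ℂ with A1·A2 ≠ 0 such that the element x = A1·e1 + A2·e2 satisfies x·x = x; equivalently, the system A1² + a3·A2² = A1, a2·A1² + A2² = A2 has a solution with A1·A2 ≠ 0. -/
open scoped BigOperators

open Polynomial in
lemma stmt6_key (a₂ a₃ : ℂ) (h : 1 - a₂ * a₃ ≠ 0) :
    ∃ A₁ A₂ : ℂ, A₁ ≠ 0 ∧ A₂ ≠ 0 ∧ A₁ ^ 2 + a₃ * A₂ ^ 2 = A₁ ∧ a₂ * A₁ ^ 2 + A₂ ^ 2 = A₂ := by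
  by_cases h3 : a₃ = 0
  · by_cases h2 : a₂ = 0
    · exact ⟨1, 1, one_ne_zero, one_ne_zero, by simp [h2, h3], by simp [h2, h3]⟩
    · obtain ⟨s, hs⟩ := IsAlgClosed.exists_pow_nat_eq (1 - 4 * a₂) (n := 2) two_pos
      have hA : ((1 + s) / 2) ^ 2 - (1 + s) / 2 + a₂ = 0 := by linear_combination hs / 4
      refine ⟨1, (1 + s) / 2, one_ne_zero, ?_, by simp [h3], by linear_combination hs / 4⟩
      intro h0
      rw [h0] at hA
      exact h2 (by simpa using hA)
  · by_cases h2 : a₂ = 0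
    · obtain ⟨s, hs⟩ := IsAlgClosed.exists_pow_nat_eq (1 - 4 * a₃) (n := 2) two_pos
      have hA : ((1 + s) / 2) ^ 2 - (1 + s) / 2 + a₃ = 0 := by linear_combination hs / 4
      refine ⟨(1 + s) / 2, 1, ?_, one_ne_zero, by linear_combination hs / 4, by simp [h2]⟩
      intro h0
      rw [h0] at hA
      exact h3 (by simpa using hA)
    · set p : ℂ[X] := C ((1 - a₂ * a₃) ^ 2) * X ^ 3 - C (2 * (1 - a₂ * a₃)) * X ^ 2
        + C (1 + a₃) * X - C a₃ with hpdef
      have hdeg : p.degree = 3 := by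
        unfold p
        compute_degree!
      obtain ⟨x, hx⟩ := IsAlgClosed.exists_root p (by rw [hdeg]; norm_num)
      have hp : (1 - a₂ * a₃) ^ 2 * x ^ 3 - 2 * (1 - a₂ * a₃) * x ^ 2 + (1 + a₃) * x - a₃ = 0 := by
        have := hx
        simp [IsRoot, hpdef] at this
        linear_combination this
      have hxne : x ≠ 0 := by
        intro h0
        rw [h0] at hp
        simp at hp
        exact h3 hp
      set y : ℂ := (x - (1 - a₂ * a₃) * x ^ 2) / a₃ with hydef
      have hy3 : a₃ * y = x - (1 - a₂ * a₃) * x ^ 2 := by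
        rw [hydef]; field_simp
      have e1 : x ^ 2 + a₃ * y ^ 2 = x := by
        have h' : a₃ * (x ^ 2 + a₃ * y ^ 2 - x) = 0 := by
          linear_combination x * hp + (a₃ * y + x - (1 - a₂ * a₃) * x ^ 2) * hy3
        rcases mul_eq_zero.mp h' with h' | h'
        · exact absurd h' h3
        · linear_combination h'
      have e2 : a₂ * x ^ 2 + y ^ 2 = y := by
        have h' : a₃ ^ 2 * (a₂ * x ^ 2 + y ^ 2 - y) = 0 := by
          linear_combination x * hp + (a₃ * y + x - (1 - a₂ * a₃) * x ^ 2 - a₃) * hy3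
        rcases mul_eq_zero.mp h' with h' | h'
        · exact absurd h' (pow_ne_zero 2 h3)
        · linear_combination h'
      refine ⟨x, y, hxne, ?_, e1, e2⟩
      intro h0
      have hx2 : x - (1 - a₂ * a₃) * x ^ 2 = 0 := by
        rw [hydef] at h0
        field_simp at h0
        linear_combination h0
      have hcx : (1 - a₂ * a₃) * x = 1 := by
        have : x * (1 - (1 - a₂ * a₃) * x) = 0 := by linear_combination hx2
        rcases mul_eq_zero.mp this with h' | h'
        · exact absurd h' hxne
        · linear_combination -h'
      have hx1 : x = 1 := by
        have ha : a₃ * (x - 1) = 0 := by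
          linear_combination hp - x * ((1 - a₂ * a₃) * x - 1) * hcx
        rcases mul_eq_zero.mp ha with h' | h'
        · exact absurd h' h3
        · linear_combination h'
      rw [hx1, mul_one] at hcx
      have : a₂ * a₃ = 0 := by linear_combination -hcx
      rcases mul_eq_zero.mp this with h' | h'
      · exact h2 h'
      · exact h3 h'

lemma stmt6_ev_red (a₂ a₃ A₁ A₂ : ℂ) (h1 : A₁ ^ 2 + a₃ * A₂ ^ 2 = A₁)
    (h2 : a₂ * A₁ ^ 2 + A₂ ^ 2 = A₂) :
    evMul ![![1, a₂], ![a₃, 1]]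
      (A₁ • (Pi.single 0 1 : Fin 2 → ℂ) + A₂ • (Pi.single 1 1 : Fin 2 → ℂ))
      (A₁ • (Pi.single 0 1 : Fin 2 → ℂ) + A₂ • (Pi.single 1 1 : Fin 2 → ℂ))
      = A₁ • (Pi.single 0 1 : Fin 2 → ℂ) + A₂ • (Pi.single 1 1 : Fin 2 → ℂ) := by
  funext j
  fin_cases j <;> simp [evMul, Fin.sum_univ_two, Pi.single_apply]
  · linear_combination h1
  · linear_combination h2

theorem stmt6 (a₂ a₃ : ℂ) (h : 1 - a₂ * a₃ ≠ 0) :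
    let A : Fin 2 → Fin 2 → ℂ := ![![1, a₂], ![a₃, 1]]
    let e : Fin 2 → (Fin 2 → ℂ) := fun i => Pi.single i 1
    ∃ A₁ A₂ : ℂ, A₁ * A₂ ≠ 0 ∧
      evMul A (A₁ • e 0 + A₂ • e 1) (A₁ • e 0 + A₂ • e 1) = A₁ • e 0 + A₂ • e 1 ∧
      A₁ ^ 2 + a₃ * A₂ ^ 2 = A₁ ∧ a₂ * A₁ ^ 2 + A₂ ^ 2 = A₂ := by
  intro A e
  obtain ⟨A₁, A₂, h1, h2, e1, e2⟩ := stmt6_key a₂ a₃ h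
  exact ⟨A₁, A₂, mul_ne_zero h1 h2, stmt6_ev_red a₂ a₃ A₁ A₂ e1 e2, e1, e2⟩
end

section
/- Let a2, a3 ∈ ℂ with 1 - a2·a3 ≠ 0, and let E5 be the evolution algebra with e1·e1 = e1 + a2·e2, e2·e2 = a3·e1 + e2, e1·e2 = 0. If x = A1·e1 + A2·e2 with A1·A2 ≠ 0, then any y ∈ E5 with x·y = 0 satisfies y = 0. Hence no element with both coordinates nonzero can be extended to a natural basis of E5. -/
open scoped BigOperators

theorem stmt7 (a₂ a₃ : ℂ) (h : 1 - a₂ * a₃ ≠ 0) (A₁ A₂ : ℂ) (hA : A₁ * A₂ ≠ 0) :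
    let A : Fin 2 → Fin 2 → ℂ := ![![1, a₂], ![a₃, 1]]
    let e : Fin 2 → (Fin 2 → ℂ) := fun i => Pi.single i 1
    let x : Fin 2 → ℂ := A₁ • e 0 + A₂ • e 1
    -- every y orthogonal to x is zero,
    (∀ y : Fin 2 → ℂ, evMul A x y = 0 → y = 0) ∧
    -- hence x cannot be extended to a natural basis of E₅
    ¬ ∃ t : Set (Fin 2 → ℂ), x ∈ t ∧
        LinearIndependent ℂ ((↑) : t → (Fin 2 → ℂ)) ∧ Submodule.span ℂ t = ⊤ ∧
        (∀ u ∈ t, ∀ v ∈ t, u ≠ v → evMul A u v = 0) := by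
  intro A e x
  have hA₁ : A₁ ≠ 0 := fun h0 => hA (by rw [h0, zero_mul])
  have hA₂ : A₂ ≠ 0 := fun h0 => hA (by rw [h0, mul_zero])
  have hx0 : x 0 = A₁ := by simp [x, e]
  have hx1 : x 1 = A₂ := by simp [x, e]
  have key : ∀ y : Fin 2 → ℂ, evMul A x y = 0 → y = 0 := by
    intro y hy
    have h0 : A₁ * y 0 * 1 + A₂ * y 1 * a₃ = 0 := by
      have := congrFun hy 0
      simpa [evMul, Fin.sum_univ_two, hx0, hx1, A] using this
    have h1 : A₁ * y 0 * a₂ + A₂ * y 1 * 1 = 0 := by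
      have := congrFun hy 1
      simpa [evMul, Fin.sum_univ_two, hx0, hx1, A] using this
    set u := A₁ * y 0
    set v := A₂ * y 1
    have hu : u = -(v * a₃) := by linear_combination h0
    have hv : v * (1 - a₂ * a₃) = 0 := by
      rw [hu] at h1; linear_combination h1
    have hv0 : v = 0 := by
      rcases mul_eq_zero.mp hv with h' | h'
      · exact h'
      · exact absurd h' h
    have hu0 : u = 0 := by rw [hu, hv0]; ring
    have hy0 : y 0 = 0 := by
      rcases mul_eq_zero.mp hu0 with h' | h'
      · exact absurd h' hA₁
      · exact h'
    have hy1 : y 1 = 0 := by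
      rcases mul_eq_zero.mp hv0 with h' | h'
      · exact absurd h' hA₂
      · exact h'
    funext i
    fin_cases i <;> simpa [hy0, hy1]
  refine ⟨key, ?_⟩
  rintro ⟨t, hxt, hli, hspan, horth⟩
  by_cases hsub : t ⊆ {x}
  · -- span t ≤ span {x} but span {x} ≠ ⊤
    have hle : Submodule.span ℂ t ≤ Submodule.span ℂ {x} := Submodule.span_mono hsub
    rw [hspan, top_le_iff] at hle
    have he0 : e 0 ∈ Submodule.span ℂ ({x} : Set (Fin 2 → ℂ)) := by
      rw [hle]; trivial
    rcases Submodule.mem_span_singleton.mp he0 with ⟨c, hc⟩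
    have hc0 : c * A₁ = 1 := by
      have := congrFun hc 0
      simpa [hx0, e] using this
    have hc1 : c * A₂ = 0 := by
      have := congrFun hc 1
      simpa [hx1, e] using this
    have hcz : c = 0 := by
      rcases mul_eq_zero.mp hc1 with h' | h'
      · exact h'
      · exact absurd h' hA₂
    rw [hcz, zero_mul] at hc0
    exact zero_ne_one hc0
  · rcases Set.not_subset.mp hsub with ⟨v, hvt, hvx⟩
    have hvx' : x ≠ v := fun h' => hvx (h' ▸ rfl)
    have hz : v = 0 := key v (horth x hxt v hvt hvx')
    have := hli.ne_zero ⟨v, hvt⟩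
    exact this (by simpa [hz])
end

section
/- Let E be a finite-dimensional complex evolution algebra satisfying condition P. Then the evolution algebra E ⊕ ℂᵏ (direct sum of E with a k-dimensional algebra with zero multiplication) also satisfies condition P. -/
open scoped BigOperators

/-- A set `t` is a natural basis of the nonassociative algebra `E` if it is a basis
consisting of pairwise orthogonal elements. -/
def IsNaturalBasisSet (E : Type*) [NonUnitalNonAssocRing E] [Module ℂ E] (t : Set E) : Prop :=
  LinearIndependent ℂ ((↑) : t → E) ∧ Submodule.span ℂ t = ⊤ ∧
    ∀ x ∈ t, ∀ y ∈ t, x ≠ y → x * y = 0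

/-- Condition P: every subalgebra admits a natural basis which extends to a
natural basis of the whole algebra. -/
def ConditionP (E : Type*) [NonUnitalNonAssocRing E] [Module ℂ E] : Prop :=
  ∀ S : NonUnitalSubalgebra ℂ E, ∃ s t : Set E, s ⊆ t ∧
    LinearIndependent ℂ ((↑) : s → E) ∧ Submodule.span ℂ s = S.toSubmodule ∧
    IsNaturalBasisSet E t

/-- Auxiliary: the union of the "graph" image of a linearly independent set in `E`
and the `inr` image of a linearly independent set in `E'` is linearly independent. -/
theorem union_indep_aux {E E' : Type*} [AddCommGroup E] [Module ℂ E]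
    [AddCommGroup E'] [Module ℂ E'] (F : E →ₗ[ℂ] E') (A : Set E) (B : Set E')
    (hA : LinearIndependent ℂ ((↑) : A → E)) (hB : LinearIndependent ℂ ((↑) : B → E')) :
    LinearIndependent ℂ
      ((↑) : ((LinearMap.id.prod F) '' A ∪ (LinearMap.inr ℂ E E') '' B : Set (E × E')) → E × E') := by
  have hkerG : LinearMap.ker (LinearMap.id.prod F) = ⊥ := by
    rw [LinearMap.ker_prod, LinearMap.ker_id, bot_inf_eq]
  have h1 : LinearIndependent ℂ ((↑) : ((LinearMap.id.prod F) '' A : Set (E × E')) → E × E') :=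
    LinearIndepOn.image hA (by rw [hkerG]; exact disjoint_bot_right)
  have h2 : LinearIndependent ℂ ((↑) : ((LinearMap.inr ℂ E E') '' B : Set (E × E')) → E × E') :=
    LinearIndepOn.image hB (by rw [Submodule.ker_inr]; exact disjoint_bot_right)
  refine LinearIndepOn.id_union h1 h2 ?_
  rw [Submodule.disjoint_def]
  intro x hx1 hx2
  have hr1 : x ∈ LinearMap.range (LinearMap.id.prod F) := by
    have : Submodule.span ℂ ((LinearMap.id.prod F) '' A : Set (E × E')) ≤
        LinearMap.range (LinearMap.id.prod F) := by
      rw [Submodule.span_le]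
      rintro _ ⟨a, _, rfl⟩
      exact LinearMap.mem_range_self _ a
    exact this hx1
  have hr2 : x ∈ LinearMap.range (LinearMap.inr ℂ E E') := by
    have : Submodule.span ℂ ((LinearMap.inr ℂ E E') '' B : Set (E × E')) ≤
        LinearMap.range (LinearMap.inr ℂ E E') := by
      rw [Submodule.span_le]
      rintro _ ⟨v, _, rfl⟩
      exact LinearMap.mem_range_self _ v
    exact this hx2
  obtain ⟨a, rfl⟩ := hr1
  obtain ⟨v, hv⟩ := hr2
  have ha : a = 0 := by
    have := congrArg Prod.fst hv
    simpa using this.symm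
  simp [ha]

theorem stmt8 (E E' : Type*) [NonUnitalNonAssocRing E] [Module ℂ E]
    [NonUnitalNonAssocRing E'] [Module ℂ E']
    [FiniteDimensional ℂ E] [FiniteDimensional ℂ E'] (k : ℕ)
    (hk : Module.finrank ℂ E' = k)
    (hzero : ∀ x y : E', x * y = 0)
    (hEvol : ∃ t : Set E, IsNaturalBasisSet E t)
    (hP : ConditionP E) :
    ConditionP (E × E') := by
  classical
  intro S
  -- the projection to `E` as a non-unital algebra hom
  set S₁ : NonUnitalSubalgebra ℂ E := S.map (NonUnitalAlgHom.fst ℂ E E') with hS₁def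
  obtain ⟨s₁, t₁, hst₁, hs₁li, hs₁span, ht₁li, ht₁span, ht₁orth⟩ := hP S₁
  -- choose lifts of elements of `s₁`
  have hchoice : ∀ e ∈ s₁, ∃ v : E', (e, v) ∈ S := by
    intro e he
    have h1 : e ∈ Submodule.span ℂ s₁ := Submodule.subset_span he
    rw [hs₁span] at h1
    have h2 : e ∈ S₁ := h1
    rw [hS₁def, NonUnitalSubalgebra.mem_map] at h2
    obtain ⟨p, hp, hpe⟩ := h2
    subst hpe
    exact ⟨p.2, hp⟩
  -- extend the choice function to a linear map `F : E →ₗ[ℂ] E'`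
  have hs₁li' : LinearIndepOn ℂ id s₁ := hs₁li
  let Bex : Module.Basis (hs₁li'.extend (Set.subset_univ s₁)) ℂ E := Module.Basis.extend hs₁li
  let F : E →ₗ[ℂ] E' :=
    Bex.constr ℂ (fun i => if h : ∃ v : E', ((i : E), v) ∈ S then h.choose else 0)
  have hF : ∀ e ∈ s₁, (e, F e) ∈ S := by
    intro e he
    have hmem : e ∈ hs₁li'.extend (Set.subset_univ s₁) := hs₁li'.subset_extend _ he
    have h1 : F e = if h : ∃ v : E', (e, v) ∈ S then h.choose else 0 := by
      have h2 := Bex.constr_basis ℂ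
        (fun i => if h : ∃ v : E', ((i : E), v) ∈ S then h.choose else 0) ⟨e, hmem⟩
      rwa [show Bex ⟨e, hmem⟩ = e from Module.Basis.extend_apply_self _ _] at h2
    rw [h1, dif_pos (hchoice e he)]
    exact (hchoice e he).choose_spec
  -- the submodule of `E'` consisting of the second components of elements of `S` over `0`
  let U : Submodule ℂ E' :=
    { carrier := {v : E' | ((0 : E), v) ∈ S}
      add_mem' := by
        intro v w hv hw
        simp only [Set.mem_setOf_eq] at hv hw ⊢
        simpa using add_mem hv hw
      zero_mem' := by
        have h := zero_mem S
        exact h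
      smul_mem' := by
        intro c v hv
        simp only [Set.mem_setOf_eq] at hv ⊢
        simpa using SMulMemClass.smul_mem c hv }
  obtain ⟨b, hbU, hbspan, hbli⟩ := exists_linearIndependent ℂ (U : Set E')
  have hbspan' : Submodule.span ℂ b = U := by rw [hbspan, Submodule.span_eq]
  have hbli' : LinearIndepOn ℂ id b := hbli
  have hbw : b ⊆ hbli'.extend (Set.subset_univ b) := hbli'.subset_extend _
  have hwli := hbli'.linearIndepOn_extend (Set.subset_univ b)
  have hwspan : Submodule.span ℂ (hbli'.extend (Set.subset_univ b)) = ⊤ := by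
    rw [hbli'.span_extend_eq_span, Submodule.span_univ]
  set G : E →ₗ[ℂ] E × E' := LinearMap.id.prod F with hGdef
  -- key membership facts
  have hmapG : Submodule.map G (Submodule.span ℂ s₁) ≤ S.toSubmodule := by
    rw [← Submodule.span_image, Submodule.span_le]
    rintro _ ⟨e, he, rfl⟩
    exact hF e he
  have hmemS₁ : ∀ p : E × E', p ∈ S → p.1 ∈ Submodule.span ℂ s₁ := by
    intro p hp
    rw [hs₁span]
    exact (NonUnitalSubalgebra.mem_map).2 ⟨p, hp, rfl⟩
  refine ⟨⇑G '' s₁ ∪ ⇑(LinearMap.inr ℂ E E') '' b,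
    ⇑G '' t₁ ∪ ⇑(LinearMap.inr ℂ E E') '' (hbli'.extend (Set.subset_univ b)),
    Set.union_subset_union (Set.image_mono hst₁) (Set.image_mono hbw),
    union_indep_aux F s₁ b hs₁li hbli, ?_,
    union_indep_aux F t₁ _ ht₁li hwli, ?_, ?_⟩
  · -- span of `s` is `S`
    rw [Submodule.span_union, Submodule.span_image, Submodule.span_image, hbspan']
    apply le_antisymm
    · refine sup_le hmapG ?_
      rintro _ ⟨v, hv, rfl⟩
      exact hv
    · intro p hp
      have hp1 : (p.1, F p.1) ∈ Submodule.map G (Submodule.span ℂ s₁) :=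
        ⟨p.1, hmemS₁ p hp, rfl⟩
      have hp1S : (p.1, F p.1) ∈ S.toSubmodule := hmapG hp1
      have hsub : ((0 : E), p.2 - F p.1) ∈ S.toSubmodule := by
        have h := sub_mem hp hp1S
        have heq : p - (p.1, F p.1) = ((0 : E), p.2 - F p.1) := by
          ext <;> simp
        rwa [heq] at h
      have hp2 : ((0 : E), p.2 - F p.1) ∈ Submodule.map (LinearMap.inr ℂ E E') U :=
        ⟨p.2 - F p.1, hsub, rfl⟩
      have heq2 : p = (p.1, F p.1) + ((0 : E), p.2 - F p.1) := by
        ext <;> simp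
      rw [heq2]
      exact add_mem (Submodule.mem_sup_left hp1) (Submodule.mem_sup_right hp2)
  · -- span of `t` is `⊤`
    rw [Submodule.span_union, Submodule.span_image, Submodule.span_image, ht₁span, hwspan,
      Submodule.map_top, Submodule.map_top, eq_top_iff]
    rintro p -
    have heq : p = G p.1 + (LinearMap.inr ℂ E E') (p.2 - F p.1) := by
      ext <;> simp [hGdef]
    rw [heq]
    exact add_mem (Submodule.mem_sup_left (LinearMap.mem_range_self _ _))
      (Submodule.mem_sup_right (LinearMap.mem_range_self _ _))
  · -- pairwise orthogonality of `t`
    have hmul : ∀ (a c : E) (u d : E'), ((a, u) : E × E') * (c, d) = (a * c, (0 : E')) := by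
      intro a c u d
      rw [Prod.mk_mul_mk, hzero]
    rintro x hx y hy hxy
    rcases hx with ⟨e, he, rfl⟩ | ⟨v, hv, rfl⟩ <;> rcases hy with ⟨e', he', rfl⟩ | ⟨v', hv', rfl⟩
    · have hee : e ≠ e' := fun h => hxy (by rw [h])
      show ((e, F e) : E × E') * (e', F e') = 0
      rw [hmul, ht₁orth e he e' he' hee]
      rfl
    · show ((e, F e) : E × E') * ((0 : E), v') = 0
      rw [hmul, mul_zero]
      rfl
    · show (((0 : E), v) : E × E') * (e', F e') = 0
      rw [hmul, zero_mul]
      rfl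
    · show (((0 : E), v) : E × E') * ((0 : E), v') = 0
      rw [hmul, zero_mul]
      rfl
end

section
/- Let E = E1 ⊕ E2 be a finite-dimensional complex evolution algebra written as a direct sum of two evolution subalgebras E1 and E2 (products between E1 and E2 are zero). If E satisfies condition P, then E1 and E2 each satisfy condition P. -/
open scoped BigOperators

lemma aux_conditionP (E : Type*) [NonUnitalNonAssocRing E] [Module ℂ E]
    (E₁ E₂ : NonUnitalSubalgebra ℂ E)
    (hcompl : IsCompl E₁.toSubmodule E₂.toSubmodule)
    (horth : ∀ x ∈ E₁, ∀ y ∈ E₂, x * y = 0 ∧ y * x = 0)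
    (hP : ConditionP E) : ConditionP E₁ := by
  classical
  set π := Submodule.projectionOnto E₁.toSubmodule E₂.toSubmodule hcompl with hπ
  -- P : E →ₗ[ℂ] ↥E₁
  let P : E →ₗ[ℂ] E₁ :=
    { toFun := fun x => ⟨(π x : E), (π x).2⟩
      map_add' := fun x y => by ext; simp
      map_smul' := fun c x => by ext; simp }
  have hPcoe : ∀ x : E, (P x : E) = (π x : E) := fun x => rfl
  have hfix : ∀ x : E, ∀ hx : x ∈ E₁, P x = ⟨x, hx⟩ := by
    intro x hx
    ext
    rw [hPcoe]
    have := Submodule.linearProjOfIsCompl_apply_left hcompl ⟨x, hx⟩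
    rw [← hπ] at this
    rw [this]
  have hmul : ∀ x y : E, (P (x * y) : E) = (P x : E) * (P y : E) := by
    intro x y
    obtain ⟨a, ha, b, hb, hab⟩ := Submodule.mem_sup.1
      (by rw [codisjoint_iff.1 hcompl.codisjoint]; trivial : x ∈ E₁.toSubmodule ⊔ E₂.toSubmodule)
    obtain ⟨c, hc, d, hd, hcd⟩ := Submodule.mem_sup.1
      (by rw [codisjoint_iff.1 hcompl.codisjoint]; trivial : y ∈ E₁.toSubmodule ⊔ E₂.toSubmodule)
    have hxy : x * y = a * c + b * d := by
      rw [← hab, ← hcd, add_mul, mul_add, mul_add]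
      rw [(horth a ha d hd).1, (horth c hc b hb).2]
      abel
    have hPx : (P x : E) = a := by
      have : P x = P a + P b := by rw [← map_add, hab]
      rw [this]
      have h1 : P a = ⟨a, ha⟩ := hfix a ha
      have h2 : (P b : E) = 0 := by
        rw [hPcoe, hπ, Submodule.projectionOnto_apply_of_mem_right hcompl hb,
          Submodule.coe_zero]
      push_cast [h1]
      rw [h2, add_zero]
    have hPy : (P y : E) = c := by
      have : P y = P c + P d := by rw [← map_add, hcd]
      rw [this]
      have h1 : P c = ⟨c, hc⟩ := hfix c hc
      have h2 : (P d : E) = 0 := by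
        rw [hPcoe, hπ, Submodule.projectionOnto_apply_of_mem_right hcompl hd,
          Submodule.coe_zero]
      push_cast [h1]
      rw [h2, add_zero]
    have hac : a * c ∈ E₁ := mul_mem ha hc
    have hbd : b * d ∈ E₂ := mul_mem hb hd
    have : P (x * y) = P (a * c) + P (b * d) := by rw [← map_add, ← hxy]
    rw [this, hPx, hPy]
    have h1 : P (a * c) = ⟨a * c, hac⟩ := hfix _ hac
    have h2 : (P (b * d) : E) = 0 := by
      rw [hPcoe, hπ, Submodule.projectionOnto_apply_of_mem_right hcompl hbd,
        Submodule.coe_zero]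
    push_cast [h1]
    rw [h2, add_zero]
  have hkerP : LinearMap.ker P = E₂.toSubmodule := by
    ext x
    constructor
    · intro hx
      have : (P x : E) = 0 := by rw [LinearMap.mem_ker.1 hx, ZeroMemClass.coe_zero]
      rw [hPcoe] at this
      have : π x = 0 := Subtype.ext this
      rw [hπ] at this
      exact (Submodule.linearProjOfIsCompl_apply_eq_zero_iff hcompl).1 this
    · intro hx
      have : π x = 0 := Submodule.projectionOnto_apply_of_mem_right hcompl hx
      exact LinearMap.mem_ker.2 (Subtype.ext (by rw [hPcoe, this, ZeroMemClass.coe_zero]))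
  intro S
  obtain ⟨s, t, hst, hs_ind, hs_span, ht_ind, ht_span, ht_orth⟩ :=
    hP (S.map (NonUnitalSubalgebraClass.subtype E₁))
  set S' := S.map (NonUnitalSubalgebraClass.subtype E₁) with hS'
  have hS'le : S'.toSubmodule ≤ E₁.toSubmodule := by
    intro x hx
    obtain ⟨w, _, hw⟩ := NonUnitalSubalgebra.mem_map.1 hx
    exact hw ▸ w.2
  -- s is inside E₁
  have hsE₁ : ∀ x ∈ s, x ∈ E₁ := by
    intro x hx
    exact hS'le (hs_span ▸ Submodule.subset_span hx)
  -- key set facts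
  have himg_ind : LinearIndependent ℂ ((↑) : (⇑P '' s) → E₁) := by
    have hdisj : Disjoint (Submodule.span ℂ (Set.range ((↑) : s → E))) (LinearMap.ker P) := by
      rw [Subtype.range_coe, hs_span, hkerP]
      exact hcompl.disjoint.mono_left hS'le
    have h1 : LinearIndependent ℂ (⇑P ∘ ((↑) : s → E)) := hs_ind.map hdisj
    exact LinearIndepOn.id_image (h1 : LinearIndepOn ℂ (⇑P) s)
  have himg_span : Submodule.span ℂ (⇑P '' s) = S.toSubmodule := by
    rw [Submodule.span_image, hs_span]
    ext z
    simp only [Submodule.mem_map]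
    constructor
    · rintro ⟨x, hx, rfl⟩
      obtain ⟨w, hw, rfl⟩ := NonUnitalSubalgebra.mem_map.1 hx
      show P (w : E) ∈ S.toSubmodule
      rw [hfix (w : E) w.2]
      simpa using hw
    · intro hz
      refine ⟨(z : E), NonUnitalSubalgebra.mem_map.2 ⟨z, hz, rfl⟩, ?_⟩
      rw [hfix (z : E) z.2]
  have hT_span : Submodule.span ℂ (⇑P '' t) = (⊤ : Submodule ℂ E₁) := by
    rw [Submodule.span_image, ht_span, Submodule.map_top]
    rw [LinearMap.range_eq_top]
    intro z
    exact ⟨(z : E), by rw [hfix (z : E) z.2]⟩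
  have hT_orth : ∀ u ∈ ⇑P '' t, ∀ v ∈ ⇑P '' t, u ≠ v → u * v = 0 := by
    rintro u ⟨x, hx, rfl⟩ v ⟨y, hy, rfl⟩ huv
    have hxy : x ≠ y := fun h => huv (by rw [h])
    have : ((P x * P y : E₁) : E) = 0 := by
      rw [MulMemClass.coe_mul, ← hmul, ht_orth x hx y hy hxy, map_zero,
        ZeroMemClass.coe_zero]
    exact Subtype.ext this
  obtain ⟨b, hbT, hsb, hTb, hb_ind⟩ :=
    exists_linearIndepOn_id_extension himg_ind (Set.image_mono (f := ⇑P) hst)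
  have hb_span : Submodule.span ℂ b = (⊤ : Submodule ℂ E₁) := by
    have : Submodule.span ℂ (⇑P '' t) ≤ Submodule.span ℂ b := Submodule.span_le.2 hTb
    rw [hT_span] at this
    exact top_le_iff.1 this
  exact ⟨⇑P '' s, b, hsb, himg_ind, himg_span, hb_ind, hb_span,
    fun x hx y hy hxy => hT_orth x (hbT hx) y (hbT hy) hxy⟩

theorem stmt9 (E : Type*) [NonUnitalNonAssocRing E] [Module ℂ E] [FiniteDimensional ℂ E]
    (hEvol : ∃ t : Set E, IsNaturalBasisSet E t)
    (E₁ E₂ : NonUnitalSubalgebra ℂ E)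
    (hdisj : E₁.toSubmodule ⊓ E₂.toSubmodule = ⊥)
    (hsup : E₁.toSubmodule ⊔ E₂.toSubmodule = ⊤)
    (horth : ∀ x ∈ E₁, ∀ y ∈ E₂, x * y = 0 ∧ y * x = 0)
    (hP : ConditionP E) :
    ConditionP E₁ ∧ ConditionP E₂ := by
  have hcompl : IsCompl E₁.toSubmodule E₂.toSubmodule :=
    ⟨disjoint_iff.2 hdisj, codisjoint_iff.2 hsup⟩
  refine ⟨aux_conditionP E E₁ E₂ hcompl horth hP,
    aux_conditionP E E₂ E₁ hcompl.symm ?_ hP⟩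
  intro x hx y hy
  exact ⟨(horth y hy x hx).2, (horth y hy x hx).1⟩
end

section
/- Let E ∈ ZN^k be a k-dimensional complex evolution algebra with natural basis {e_1,...,e_k} whose structure matrix is strictly upper triangular with a_{i,i+1} = 1 for 1 ≤ i ≤ k-1 and last column/row zero as in the maximal-nilpotency form (so e_i² ∈ e_{i+1} + span{e_{i+2},...,e_{k-1}} for i ≤ k-2, e_{k-1}² = e_k, e_k² = 0). Then every subalgebra of E equals span{e_i, e_{i+1}, ..., e_k} for some i, and in particular every subalgebra of E is an evolution subalgebra whose natural basis extends to a natural basis of E (E satisfies condition P). -/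
open scoped BigOperators

/-- Decomposition of a vector in terms of `Pi.single`. -/
lemma evAux_decomp {k : ℕ} (x : Fin k → ℂ) : x = ∑ j, x j • (Pi.single j 1 : Fin k → ℂ) := by
  have h : ∀ j : Fin k, x j • (Pi.single j 1 : Fin k → ℂ) = Pi.single j (x j) := by
    intro j
    rw [← Pi.single_smul, smul_eq_mul, mul_one]
  calc x = ∑ j, Pi.single j (x j) := (Finset.univ_sum_single x).symm
    _ = ∑ j, x j • (Pi.single j 1 : Fin k → ℂ) := by simp_rw [h]

/-- If `x ∈ S` has leading coefficient 1 at `m` and all later singles are in `S`,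
then `Pi.single m 1 ∈ S`. -/
lemma evAux_sub_step {k : ℕ} (S : Submodule ℂ (Fin k → ℂ)) (m : Fin k)
    (x : Fin k → ℂ) (hxS : x ∈ S)
    (hx0 : ∀ j : Fin k, j < m → x j = 0) (hx1 : x m = 1)
    (hlater : ∀ j : Fin k, m < j → (Pi.single j 1 : Fin k → ℂ) ∈ S) :
    (Pi.single m 1 : Fin k → ℂ) ∈ S := by
  classical
  have hsplit := Finset.sum_filter_add_sum_filter_not Finset.univ
    (fun j : Fin k => m < j) (fun j => x j • (Pi.single j 1 : Fin k → ℂ))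
  have hx : x = ∑ j ∈ Finset.univ.filter (fun j : Fin k => m < j), x j • (Pi.single j 1 : Fin k → ℂ)
      + ∑ j ∈ Finset.univ.filter (fun j : Fin k => ¬ m < j), x j • (Pi.single j 1 : Fin k → ℂ) := by
    rw [hsplit]; exact evAux_decomp x
  have hlow : ∑ j ∈ Finset.univ.filter (fun j : Fin k => ¬ m < j),
      x j • (Pi.single j 1 : Fin k → ℂ) = (Pi.single m 1 : Fin k → ℂ) := by
    rw [Finset.sum_eq_single m]
    · rw [hx1, one_smul]
    · intro j hj hjm
      have hj' : ¬ m < j := (Finset.mem_filter.mp hj).2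
      have : j < m := lt_of_le_of_ne (not_lt.mp hj') hjm
      rw [hx0 j this, zero_smul]
    · intro hm
      exact absurd (Finset.mem_filter.mpr ⟨Finset.mem_univ m, lt_irrefl m⟩) hm
  have hmem : ∑ j ∈ Finset.univ.filter (fun j : Fin k => m < j),
      x j • (Pi.single j 1 : Fin k → ℂ) ∈ S := by
    apply Submodule.sum_mem
    intro j hj
    exact S.smul_mem _ (hlater j (Finset.mem_filter.mp hj).2)
  rw [hlow] at hx
  have : (Pi.single m 1 : Fin k → ℂ) = x - ∑ j ∈ Finset.univ.filter (fun j : Fin k => m < j),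
      x j • (Pi.single j 1 : Fin k → ℂ) := by
    rw [eq_sub_iff_add_eq, add_comm]
    exact hx.symm
  rw [this]
  exact S.sub_mem hxS hmem

/-- Squaring pushes the leading index up by one. -/
lemma evAux_sq {k : ℕ} (A : Fin k → Fin k → ℂ)
    (h1 : ∀ i j : Fin k, (j : ℕ) = (i : ℕ) + 1 → A i j = 1)
    (h2 : ∀ i j : Fin k, (j : ℕ) ≤ (i : ℕ) → A i j = 0)
    (m : Fin k) (hm : (m:ℕ)+1 < k) (x : Fin k → ℂ)
    (hx0 : ∀ j : Fin k, j < m → x j = 0) (hx1 : x m = 1) :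
    (∀ j : Fin k, j < (⟨(m:ℕ)+1, hm⟩ : Fin k) → evMul A x x j = 0) ∧
      evMul A x x ⟨(m:ℕ)+1, hm⟩ = 1 := by
  constructor
  · intro j hj
    have hj' : (j:ℕ) ≤ (m:ℕ) := by
      have := Fin.lt_def.mp hj
      simpa using Nat.lt_succ_iff.mp this
    unfold evMul
    apply Finset.sum_eq_zero
    intro i _
    by_cases hi : i < m
    · rw [hx0 i hi]; ring
    · have : (m:ℕ) ≤ (i:ℕ) := Fin.le_def.mp (not_lt.mp hi)
      rw [h2 i j (le_trans hj' this)]; ring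
  · unfold evMul
    rw [Finset.sum_eq_single m]
    · rw [hx1, h1 m ⟨(m:ℕ)+1, hm⟩ rfl]; ring
    · intro i _ him
      by_cases hi : i < m
      · rw [hx0 i hi]; ring
      · have hmi : (m:ℕ) < (i:ℕ) := by
          have := lt_of_le_of_ne (not_lt.mp hi) (Ne.symm him)
          exact Fin.lt_def.mp this
        have : ((⟨(m:ℕ)+1, hm⟩ : Fin k) : ℕ) ≤ (i:ℕ) := by simpa using hmi
        rw [h2 i _ this]; ring
    · intro hm'
      exact absurd (Finset.mem_univ m) hm'

/-- Downward induction: from a leading-1 element at `m`, all singles from `m` on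
belong to `S`. -/
lemma evAux_claim {k : ℕ} (A : Fin k → Fin k → ℂ)
    (h1 : ∀ i j : Fin k, (j : ℕ) = (i : ℕ) + 1 → A i j = 1)
    (h2 : ∀ i j : Fin k, (j : ℕ) ≤ (i : ℕ) → A i j = 0)
    (S : Submodule ℂ (Fin k → ℂ)) (hS : ∀ x ∈ S, ∀ y ∈ S, evMul A x y ∈ S) :
    ∀ (d : ℕ) (m : Fin k), k - (m:ℕ) ≤ d + 1 →
      ∀ x ∈ S, (∀ j : Fin k, j < m → x j = 0) → x m = 1 →
      ∀ j : Fin k, m ≤ j → (Pi.single j 1 : Fin k → ℂ) ∈ S := by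
  intro d
  induction d with
  | zero =>
    intro m hd x hxS hx0 hx1 j hj
    have hmk : k ≤ (m:ℕ) + 1 := by omega
    have hjm : j = m := by
      have : (j:ℕ) < k := j.isLt
      have : (j:ℕ) ≤ (m:ℕ) := by omega
      exact le_antisymm (Fin.le_def.mpr this) hj
    rw [hjm]
    apply evAux_sub_step S m x hxS hx0 hx1
    intro l hl
    exact absurd (Fin.lt_def.mp hl) (by
      have := l.isLt; omega)
  | succ d ih =>
    intro m hd x hxS hx0 hx1 j hj
    by_cases hm : (m:ℕ) + 1 < k
    · -- squaring step
      set m' : Fin k := ⟨(m:ℕ)+1, hm⟩ with hm'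
      obtain ⟨hy0, hy1⟩ := evAux_sq A h1 h2 m hm x hx0 hx1
      have hyS : evMul A x x ∈ S := hS x hxS x hxS
      have hIH : ∀ l : Fin k, m' ≤ l → (Pi.single l 1 : Fin k → ℂ) ∈ S := by
        apply ih m' (by simp [hm']; omega) (evMul A x x) hyS hy0 hy1
      have hlater : ∀ l : Fin k, m < l → (Pi.single l 1 : Fin k → ℂ) ∈ S := by
        intro l hl
        apply hIH
        exact Fin.le_def.mpr (by simpa [hm'] using Fin.lt_def.mp hl)
      rcases eq_or_lt_of_le hj with h | h
      · exact h ▸ evAux_sub_step S m x hxS hx0 hx1 hlater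
      · exact hlater j h
    · -- m is the last index
      have hjm : j = m := by
        have h1' : (j:ℕ) < k := j.isLt
        have : (j:ℕ) ≤ (m:ℕ) := by omega
        exact le_antisymm (Fin.le_def.mpr this) hj
      rw [hjm]
      apply evAux_sub_step S m x hxS hx0 hx1
      intro l hl
      exact absurd (Fin.lt_def.mp hl) (by have := l.isLt; omega)

/-- Main structural result: every nonzero subalgebra is a tail span. -/
lemma evAux_main {k : ℕ} (A : Fin k → Fin k → ℂ)
    (h1 : ∀ i j : Fin k, (j : ℕ) = (i : ℕ) + 1 → A i j = 1)
    (h2 : ∀ i j : Fin k, (j : ℕ) ≤ (i : ℕ) → A i j = 0)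
    (S : Submodule ℂ (Fin k → ℂ)) (hS : ∀ x ∈ S, ∀ y ∈ S, evMul A x y ∈ S)
    (hne : S ≠ ⊥) :
    ∃ i : Fin k, S = Submodule.span ℂ
      ((fun i : Fin k => (Pi.single i 1 : Fin k → ℂ)) '' {j | i ≤ j}) := by
  classical
  obtain ⟨x₀, hx₀S, hx₀⟩ := Submodule.exists_mem_ne_zero_of_ne_bot hne
  have hI : ({j : Fin k | ∃ x ∈ S, x j ≠ 0}).Nonempty := by
    obtain ⟨j, hj⟩ := Function.ne_iff.mp hx₀
    exact ⟨j, x₀, hx₀S, hj⟩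
  obtain ⟨m, hmI, hmin⟩ := Set.exists_min_image _ id (Set.toFinite _) hI
  obtain ⟨x, hxS, hxm⟩ := hmI
  -- all elements of S vanish below m
  have hlow : ∀ y ∈ S, ∀ j : Fin k, j < m → y j = 0 := by
    intro y hyS j hj
    by_contra hne'
    exact absurd (hmin j ⟨y, hyS, hne'⟩) (not_le.mpr hj)
  -- normalize x
  set x' := (x m)⁻¹ • x with hx'
  have hx'S : x' ∈ S := S.smul_mem _ hxS
  have hx'0 : ∀ j : Fin k, j < m → x' j = 0 := by
    intro j hj
    simp [hx', hlow x hxS j hj]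
  have hx'1 : x' m = 1 := by
    simp [hx', inv_mul_cancel₀ hxm]
  have hsingles : ∀ j : Fin k, m ≤ j → (Pi.single j 1 : Fin k → ℂ) ∈ S :=
    evAux_claim A h1 h2 S hS k m (by have := m.isLt; omega) x' hx'S hx'0 hx'1
  refine ⟨m, le_antisymm ?_ ?_⟩
  · intro y hyS
    rw [evAux_decomp y]
    apply Submodule.sum_mem
    intro j _
    by_cases hj : m ≤ j
    · exact Submodule.smul_mem _ _ (Submodule.subset_span ⟨j, hj, rfl⟩)
    · rw [hlow y hyS j (not_le.mp hj), zero_smul]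
      exact Submodule.zero_mem _
  · rw [Submodule.span_le]
    rintro _ ⟨j, hj, rfl⟩
    exact hsingles j hj

theorem stmt15 (k : ℕ) (hk : 2 ≤ k) (A : Fin k → Fin k → ℂ)
    -- A is of maximal-nilpotency (ZN^k) form:
    -- superdiagonal entries equal 1 (so e_i² = e_{i+1} + ⋯ and e_{k-1}² = e_k),
    (h1 : ∀ i j : Fin k, (j : ℕ) = (i : ℕ) + 1 → A i j = 1)
    -- entries on or below the diagonal vanish (in particular e_k² = 0),
    (h2 : ∀ i j : Fin k, (j : ℕ) ≤ (i : ℕ) → A i j = 0)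
    -- the last column vanishes except for the entry coming from e_{k-1}² = e_k
    (h3 : ∀ i j : Fin k, (j : ℕ) = k - 1 → (i : ℕ) + 1 ≠ k - 1 → A i j = 0) :
    let e : Fin k → (Fin k → ℂ) := fun i => Pi.single i 1
    -- every nonzero subalgebra is span{e_i, e_{i+1}, …, e_k},
    (∀ S : Submodule ℂ (Fin k → ℂ), (∀ x ∈ S, ∀ y ∈ S, evMul A x y ∈ S) → S ≠ ⊥ →
      ∃ i : Fin k, S = Submodule.span ℂ (e '' {j | i ≤ j})) ∧
    -- in particular every subalgebra has a natural basis extending to one of E (condition P)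
    (∀ S : Submodule ℂ (Fin k → ℂ), (∀ x ∈ S, ∀ y ∈ S, evMul A x y ∈ S) →
      ∃ s t : Set (Fin k → ℂ), s ⊆ t ∧
        LinearIndependent ℂ ((↑) : s → (Fin k → ℂ)) ∧ Submodule.span ℂ s = S ∧
        LinearIndependent ℂ ((↑) : t → (Fin k → ℂ)) ∧ Submodule.span ℂ t = ⊤ ∧
        (∀ u ∈ t, ∀ v ∈ t, u ≠ v → evMul A u v = 0)) := by
  intro e
  have he : e = fun i : Fin k => (Pi.single i 1 : Fin k → ℂ) := rfl
  -- facts about the natural basis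
  have hbe : ∀ i : Fin k, (Pi.basisFun ℂ (Fin k)) i = e i := fun i =>
    Pi.basisFun_apply ℂ (Fin k) i
  have hrange : Set.range e = Set.range ⇑(Pi.basisFun ℂ (Fin k)) := by
    rw [show ⇑(Pi.basisFun ℂ (Fin k)) = e from funext hbe]
  have htli : LinearIndependent ℂ ((↑) : Set.range e → (Fin k → ℂ)) := by
    rw [hrange]
    exact (linearIndepOn_id_range_iff (Pi.basisFun ℂ (Fin k)).injective).mpr (Pi.basisFun ℂ (Fin k)).linearIndependent
  have htspan : Submodule.span ℂ (Set.range e) = ⊤ := by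
    rw [hrange]
    exact (Pi.basisFun ℂ (Fin k)).span_eq
  have horth : ∀ u ∈ Set.range e, ∀ v ∈ Set.range e, u ≠ v → evMul A u v = 0 := by
    rintro _ ⟨a, rfl⟩ _ ⟨b, rfl⟩ huv
    have hab : a ≠ b := fun h => huv (by rw [h])
    funext l
    simp only [evMul, he, Pi.zero_apply]
    apply Finset.sum_eq_zero
    intro p _
    by_cases hp : p = a
    · subst hp
      rw [show (Pi.single b 1 : Fin k → ℂ) p = 0 from Pi.single_eq_of_ne hab 1]
      ring
    · rw [show (Pi.single a 1 : Fin k → ℂ) p = 0 from Pi.single_eq_of_ne hp 1]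
      ring
  constructor
  · intro S hS hne
    exact evAux_main A h1 h2 S hS hne
  · intro S hS
    by_cases hne : S = ⊥
    · refine ⟨∅, Set.range e, Set.empty_subset _, linearIndependent_empty ℂ _, ?_, htli,
        htspan, horth⟩
      rw [Submodule.span_empty, hne]
    · obtain ⟨i, hSeq⟩ := evAux_main A h1 h2 S hS hne
      refine ⟨e '' {j | i ≤ j}, Set.range e, Set.image_subset_range _ _, ?_, hSeq.symm,
        htli, htspan, horth⟩
      exact LinearIndepOn.mono (v := id) htli (Set.image_subset_range _ _)
end

section
/- In a complex evolution algebra E of type ZN^k (nilpotent of maximal index, with e_i² = e_{i+1} + Σ_{j≥i+2, j≤k-1} a_{ij} e_j for i ≤ k-2, e_{k-1}² = e_k, e_k² = 0), if a subalgebra M contains an element of the form e_j + Σ_{s=j+1}^{k} β_s e_s, then M contains all of e_j, e_{j+1}, ..., e_k. -/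
open scoped BigOperators

theorem stmt16 (k : ℕ) (hk : 2 ≤ k) (A : Fin k → Fin k → ℂ)
    -- A is of maximal-nilpotency (ZN^k) form:
    (h1 : ∀ i j : Fin k, (j : ℕ) = (i : ℕ) + 1 → A i j = 1)
    (h2 : ∀ i j : Fin k, (j : ℕ) ≤ (i : ℕ) → A i j = 0)
    (h3 : ∀ i j : Fin k, (j : ℕ) = k - 1 → (i : ℕ) + 1 ≠ k - 1 → A i j = 0)
    (M : Submodule ℂ (Fin k → ℂ)) (hM : ∀ x ∈ M, ∀ y ∈ M, evMul A x y ∈ M)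
    -- M contains an element of the form e_j + ∑_{s=j+1}^k β_s e_s
    (j : Fin k) (x : Fin k → ℂ) (hxM : x ∈ M)
    (hxj : x j = 1) (hxlow : ∀ s : Fin k, s < j → x s = 0) :
    -- then M contains e_j, e_{j+1}, …, e_k
    ∀ s : Fin k, j ≤ s → Pi.single s (1 : ℂ) ∈ M := by
  -- squaring an element with leading 1 at s gives leading 1 at s+1
  have sq : ∀ z : Fin k → ℂ, ∀ s : Fin k, z s = 1 → (∀ t, t < s → z t = 0) →
      (∀ t : Fin k, (t:ℕ) ≤ (s:ℕ) → evMul A z z t = 0) ∧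
      (∀ t : Fin k, (t:ℕ) = (s:ℕ)+1 → evMul A z z t = 1) := by
    intro z s hzs hzlow
    constructor
    · intro t ht
      apply Finset.sum_eq_zero
      intro i _
      rcases lt_or_ge i s with hi | hi
      · rw [hzlow i hi]; ring
      · rw [h2 i t (le_trans ht hi)]; ring
    · intro t ht
      show (∑ i, z i * z i * A i t) = 1
      rw [Finset.sum_eq_single s]
      · rw [hzs, h1 s t ht]; ring
      · intro i _ hi
        rcases lt_or_ge i s with h' | h'
        · rw [hzlow i h']; ring
        · have hv : (s:ℕ) < (i:ℕ) := Fin.lt_iff_val_lt_val.mp (h'.lt_of_ne (Ne.symm hi))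
          rw [h2 i t (by omega)]; ring
      · simp
  -- elements with leading 1 at each index ≥ j
  have lead : ∀ n : ℕ, ∀ s : Fin k, (s:ℕ) = (j:ℕ) + n →
      ∃ z, z ∈ M ∧ z s = 1 ∧ ∀ t, t < s → z t = 0 := by
    intro n
    induction n with
    | zero =>
      intro s hs
      have : s = j := Fin.ext (by omega)
      subst this
      exact ⟨x, hxM, hxj, hxlow⟩
    | succ n ih =>
      intro s hs
      have hs' : (j:ℕ) + n < k := by have := s.isLt; omega
      obtain ⟨z, hzM, hz1, hz0⟩ := ih ⟨(j:ℕ) + n, hs'⟩ rfl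
      obtain ⟨hA, hB⟩ := sq z ⟨(j:ℕ) + n, hs'⟩ hz1 hz0
      refine ⟨evMul A z z, hM z hzM z hzM, hB s (by show (s:ℕ) = (j:ℕ) + n + 1; omega), ?_⟩
      intro t ht
      have := Fin.lt_iff_val_lt_val.mp ht
      exact hA t (by simp at this ⊢; omega)
  -- downward induction to extract basis vectors
  have down : ∀ n : ℕ, ∀ s : Fin k, j ≤ s → k - 1 - (s:ℕ) ≤ n → Pi.single s (1:ℂ) ∈ M := by
    intro n
    induction n with
    | zero =>
      intro s hjs hn
      obtain ⟨z, hzM, hz1, hz0⟩ := lead ((s:ℕ) - (j:ℕ)) s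
        (by have := Fin.le_iff_val_le_val.mp hjs; omega)
      have hsk : (s:ℕ) = k - 1 := by have := s.isLt; omega
      have : Pi.single s (1:ℂ) = z := by
        funext u
        rcases lt_trichotomy u s with h | h | h
        · rw [hz0 u h, Pi.single_apply, if_neg (Fin.ne_of_lt h)]
        · subst h; rw [hz1, Pi.single_apply, if_pos rfl]
        · exact absurd (Fin.lt_iff_val_lt_val.mp h) (by have := u.isLt; omega)
      rw [this]; exact hzM
    | succ n ih =>
      intro s hjs hn
      obtain ⟨z, hzM, hz1, hz0⟩ := lead ((s:ℕ) - (j:ℕ)) s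
        (by have := Fin.le_iff_val_le_val.mp hjs; omega)
      have key : Pi.single s (1:ℂ)
          = z - ∑ t ∈ Finset.univ.filter (fun t => s < t), z t • (Pi.single t 1 : Fin k → ℂ) := by
        funext u
        have hsum : (∑ t ∈ Finset.univ.filter (fun t => s < t), z t • (Pi.single t 1 : Fin k → ℂ)) u
            = if s < u then z u else 0 := by
          rw [Finset.sum_apply]
          simp only [Pi.smul_apply, Pi.single_apply, smul_eq_mul, mul_ite, mul_one, mul_zero]
          rw [Finset.sum_ite_eq]
          simp
        rw [Pi.sub_apply, hsum]
        rcases lt_trichotomy u s with h | h | h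
        · rw [hz0 u h, Pi.single_apply, if_neg (Fin.ne_of_lt h), if_neg (asymm h)]
          ring
        · subst h; rw [hz1, Pi.single_apply, if_pos rfl, if_neg (lt_irrefl u)]; ring
        · rw [Pi.single_apply, if_neg (Fin.ne_of_gt h), if_pos h]; ring
      rw [key]
      refine Submodule.sub_mem M hzM (Submodule.sum_mem M ?_)
      intro t htf
      simp only [Finset.mem_filter, Finset.mem_univ, true_and] at htf
      have hst := Fin.lt_iff_val_lt_val.mp htf
      refine Submodule.smul_mem M _ (ih t (le_trans hjs (le_of_lt htf)) ?_)
      have := t.isLt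
      omega
  intro s hjs
  exact down (k - 1 - (s:ℕ)) s hjs le_rfl
end

section
/- Let A = (a_{ij}) be an invertible 2×2 complex matrix. Then the system x1² = a_{11} x1 + a_{21} x2, x2² = a_{12} x1 + a_{22} x2 has a solution (x1, x2) ∈ ℂ² with x1 ≠ 0 and x2 ≠ 0. -/
open Polynomial

/-- Over ℂ, a monic quadratic with nonzero constant term has a nonzero root. -/
lemma quad_root_ne_zero (p q : ℂ) (hq : q ≠ 0) : ∃ z : ℂ, z ≠ 0 ∧ z ^ 2 = p * z + q := by
  obtain ⟨s, hs⟩ := IsAlgClosed.exists_pow_nat_eq (k := ℂ) (p ^ 2 + 4 * q) (n := 2) (by norm_num)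
  have heq : ((p + s) / 2) ^ 2 = p * ((p + s) / 2) + q := by
    linear_combination hs / 4
  refine ⟨(p + s) / 2, ?_, heq⟩
  intro h0
  rw [h0] at heq
  simp at heq
  exact hq heq.symm

theorem stmt17 (A : Matrix (Fin 2) (Fin 2) ℂ) (hA : IsUnit A) :
    ∃ x₁ x₂ : ℂ, x₁ ≠ 0 ∧ x₂ ≠ 0 ∧
      x₁ ^ 2 = A 0 0 * x₁ + A 1 0 * x₂ ∧
      x₂ ^ 2 = A 0 1 * x₁ + A 1 1 * x₂ := by
  set a := A 0 0 with ha
  set b := A 1 0 with hb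
  set c := A 0 1 with hc
  set d := A 1 1 with hd
  have hdet : a * d - c * b ≠ 0 := by
    have := (Matrix.isUnit_iff_isUnit_det A).mp hA
    rw [Matrix.det_fin_two] at this
    simpa [ha, hb, hc, hd] using this.ne_zero
  by_cases hc0 : c = 0
  · -- x₂ = d, x₁ root of x² = a x + b d
    have hd0 : d ≠ 0 := by intro h; apply hdet; rw [h, hc0]; ring
    have ha0 : a ≠ 0 := by intro h; apply hdet; rw [h, hc0]; ring
    by_cases hb0 : b = 0
    · exact ⟨a, d, ha0, hd0, by rw [hb0]; ring, by rw [hc0]; ring⟩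
    · obtain ⟨z, hz0, hz⟩ := quad_root_ne_zero a (b * d) (mul_ne_zero hb0 hd0)
      exact ⟨z, d, hz0, hd0, hz, by rw [hc0]; ring⟩
  · by_cases hb0 : b = 0
    · -- x₁ = a, x₂ root of x² = d x + c a
      have ha0 : a ≠ 0 := by intro h; apply hdet; rw [h, hb0]; ring
      obtain ⟨z, hz0, hz⟩ := quad_root_ne_zero d (c * a) (mul_ne_zero hc0 ha0)
      exact ⟨a, z, ha0, hz0, by rw [hb0]; ring, by linear_combination hz⟩
    · -- cubic case
      set P : Polynomial ℂ :=
        C 1 * X ^ 3 + C (-2 * a) * X ^ 2 + C (a ^ 2 - b * d) * X + C (a * b * d - b ^ 2 * c)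
        with hP
      have hdeg : P.degree = 3 := by rw [hP]; exact Polynomial.degree_cubic one_ne_zero
      obtain ⟨z, hzroot⟩ := Complex.exists_root (f := P) (by rw [hdeg]; norm_num)
      have hz : z ^ 3 - 2 * a * z ^ 2 + (a ^ 2 - b * d) * z + (a * b * d - b ^ 2 * c) = 0 := by
        have := hzroot
        simp only [Polynomial.IsRoot, hP, Polynomial.eval_add, Polynomial.eval_mul,
          Polynomial.eval_pow, Polynomial.eval_C, Polynomial.eval_X] at this
        linear_combination this
      have hz0 : z ≠ 0 := by
        intro h
        rw [h] at hz
        apply hb0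
        have : b * (a * d - c * b) = 0 := by linear_combination hz
        exact (mul_eq_zero.mp this).resolve_right hdet
      have hza : z ≠ a := by
        intro h
        rw [h] at hz
        have hb2c : b ^ 2 * c = 0 := by linear_combination -hz
        rcases mul_eq_zero.mp hb2c with h' | h'
        · exact hb0 (pow_eq_zero_iff (n := 2) (by norm_num) |>.mp h')
        · exact hc0 h'
      refine ⟨z, (z ^ 2 - a * z) / b, hz0, ?_, by field_simp; ring, ?_⟩
      · have : z ^ 2 - a * z ≠ 0 := by
          intro h
          apply hza
          have : z * (z - a) = 0 := by linear_combination h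
          rcases mul_eq_zero.mp this with h' | h'
          · exact absurd h' hz0
          · exact sub_eq_zero.mp h'
        exact div_ne_zero this hb0
      · field_simp
        linear_combination hz
end
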